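/- Let u : (D,∂D) → (ℂⁿ, T(a₁,…,aₙ)) be a non-constant holomorphic map from the closed unit disc with boundary on the product torus T(a₁,…,aₙ) = T(a₁)×…×T(aₙ). Then the symplectic area ∫_D u*ωₙ is at least min(a₁,…,aₙ). -/

import Mathlib

open Complex Metric Set MeasureTheory

private lemma closure_unit_ball : closure (ball (0:ℂ) 1) = closedBall (0:ℂ) 1 :=
  closure_ball 0 one_ne_zero

private lemma maxmod {f : ℂ → ℂ} {r : ℝ} (hf : DiffContOnCl ℂ f (ball 0 1))
    (hb : ∀ z : ℂ, ‖z‖ = 1 → ‖f z‖ = r) :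
    ∀ z ∈ closedBall (0:ℂ) 1, ‖f z‖ ≤ r := by
  intro z hz
  have hcl : z ∈ closure (ball (0:ℂ) 1) := by rwa [closure_unit_ball]
  refine Complex.norm_le_of_forall_mem_frontier_norm_le isBounded_ball hf ?_ hcl
  intro w hw
  rw [frontier_ball (0:ℂ) one_ne_zero, mem_sphere_zero_iff_norm] at hw
  exact (hb w hw).le

private lemma normSq_le_one_of_norm_le {α : ℂ} (hα : ‖α‖ ≤ 1) :
    α.re * α.re + α.im * α.im ≤ 1 := by
  have h : Complex.normSq α ≤ 1 := by
    rw [Complex.normSq_eq_norm_sq]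
    nlinarith [norm_nonneg α]
  rwa [Complex.normSq_apply] at h

private lemma norm_sub_le_one_sub_conj_mul {α z : ℂ} (hα : ‖α‖ ≤ 1) (hz : ‖z‖ ≤ 1) :
    ‖z - α‖ ≤ ‖1 - (starRingEnd ℂ) α * z‖ := by
  have hα' := normSq_le_one_of_norm_le hα
  have hz' := normSq_le_one_of_norm_le hz
  rw [Complex.norm_def, Complex.norm_def]
  apply Real.sqrt_le_sqrt
  simp only [Complex.normSq_apply, Complex.sub_re, Complex.sub_im, Complex.mul_re,
    Complex.mul_im, Complex.one_re, Complex.one_im, Complex.conj_re, Complex.conj_im]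
  nlinarith [mul_nonneg (sub_nonneg.2 hα') (sub_nonneg.2 hz')]

private lemma norm_one_sub_conj_mul_of_norm_one {α z : ℂ} (hz : ‖z‖ = 1) :
    ‖1 - (starRingEnd ℂ) α * z‖ = ‖z - α‖ := by
  have hzz : z * (starRingEnd ℂ) z = 1 := by
    rw [Complex.mul_conj]
    norm_cast
    rw [Complex.normSq_eq_norm_sq, hz]; norm_num
  have h2 : z * (starRingEnd ℂ) (1 - (starRingEnd ℂ) α * z) = z - α := by
    calc z * (starRingEnd ℂ) (1 - (starRingEnd ℂ) α * z)
        = z - α * (z * (starRingEnd ℂ) z) := by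
          simp only [map_sub, map_mul, Complex.conj_conj, map_one]; ring
      _ = z - α := by rw [hzz, mul_one]
  calc ‖1 - (starRingEnd ℂ) α * z‖
      = ‖z‖ * ‖(starRingEnd ℂ) (1 - (starRingEnd ℂ) α * z)‖ := by
        rw [RCLike.norm_conj, hz, one_mul]
    _ = ‖z - α‖ := by rw [← norm_mul, h2]

/-- If `f` is nonvanishing on the closed ball with constant boundary modulus, its
derivative vanishes on the open ball. -/
private lemma deriv_eq_zero_of_nonvanishing {f : ℂ → ℂ} {r : ℝ} (hr : 0 < r)
    (hf : DiffContOnCl ℂ f (ball 0 1)) (hb : ∀ z : ℂ, ‖z‖ = 1 → ‖f z‖ = r)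
    (hnz : ∀ z ∈ closedBall (0:ℂ) 1, f z ≠ 0) :
    ∀ z ∈ ball (0:ℂ) 1, deriv f z = 0 := by
  have hub := maxmod hf hb
  have hcont : ContinuousOn f (closedBall (0:ℂ) 1) := by
    have := hf.continuousOn; rwa [closure_unit_ball] at this
  have hinv : DiffContOnCl ℂ (fun z => (f z)⁻¹) (ball 0 1) := by
    refine ⟨hf.differentiableOn.inv (fun z hz => hnz z (ball_subset_closedBall hz)), ?_⟩
    rw [closure_unit_ball]
    exact hcont.inv₀ hnz
  have hbinv : ∀ z : ℂ, ‖z‖ = 1 → ‖(f z)⁻¹‖ = r⁻¹ := by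
    intro z hz; rw [norm_inv, hb z hz]
  have hlow : ∀ z ∈ closedBall (0:ℂ) 1, r ≤ ‖f z‖ := by
    intro z hz
    have h1 : ‖(f z)⁻¹‖ ≤ r⁻¹ := maxmod hinv hbinv z hz
    rw [norm_inv] at h1
    have hpos : 0 < ‖f z‖ := norm_pos_iff.2 (hnz z hz)
    have := inv_anti₀ (by positivity) h1
    rwa [inv_inv, inv_inv] at this
  have hmaxon : IsMaxOn (norm ∘ f) (ball (0:ℂ) 1) 0 := by
    intro y hy
    simp only [Function.comp_apply]
    calc ‖f y‖ ≤ r := hub y (ball_subset_closedBall hy)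
      _ ≤ ‖f 0‖ := hlow 0 (mem_closedBall_self one_pos.le)
  have heq := Complex.eqOn_of_isPreconnected_of_isMaxOn_norm
    (convex_ball (0:ℂ) 1).isPreconnected isOpen_ball hf.differentiableOn
    (mem_ball_self one_pos) hmaxon
  intro z hz
  have hev : f =ᶠ[nhds z] Function.const ℂ (f 0) :=
    Filter.eventuallyEq_of_mem (isOpen_ball.mem_nhds hz) heq
  rw [hev.deriv_eq]
  exact deriv_const z (f 0)

/-- There is an annulus `ρ0 ≤ ‖z‖ ≤ 1` on which `‖f‖ ≥ r / 2`. -/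
private lemma exists_annulus {f : ℂ → ℂ} {r : ℝ} (hr : 0 < r)
    (hcont : ContinuousOn f (closedBall (0:ℂ) 1))
    (hb : ∀ z : ℂ, ‖z‖ = 1 → ‖f z‖ = r) :
    ∃ ρ0 : ℝ, 0 < ρ0 ∧ ρ0 < 1 ∧
      ∀ z ∈ closedBall (0:ℂ) 1, ρ0 ≤ ‖z‖ → r / 2 ≤ ‖f z‖ := by
  set K := closedBall (0:ℂ) 1 ∩ (fun z => ‖f z‖) ⁻¹' (Iic (r / 2)) with hK
  have hKclosed : IsClosed K :=
    (continuous_norm.comp_continuousOn hcont).preimage_isClosed_of_isClosed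
      Metric.isClosed_closedBall isClosed_Iic
  have hKcomp : IsCompact K :=
    (isCompact_closedBall (0:ℂ) 1).of_isClosed_subset hKclosed inter_subset_left
  rcases K.eq_empty_or_nonempty with hKe | hKne
  · refine ⟨1/2, by norm_num, by norm_num, ?_⟩
    intro z hz _
    by_contra h
    push_neg at h
    have : z ∈ K := ⟨hz, le_of_lt h⟩
    rw [hKe] at this
    exact this
  · obtain ⟨zs, hzsK, hmax⟩ := hKcomp.exists_isMaxOn hKne continuous_norm.continuousOn
    have hzs1 : ‖zs‖ < 1 := by
      rcases lt_or_eq_of_le (mem_closedBall_zero_iff.1 hzsK.1) with h | h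
      · exact h
      · exfalso
        have h1 : ‖f zs‖ = r := hb zs h
        have h2 : ‖f zs‖ ≤ r / 2 := hzsK.2
        linarith
    refine ⟨(‖zs‖ + 1) / 2, by positivity, by linarith, ?_⟩
    intro z hz hρ
    by_contra h
    push_neg at h
    have hzK : z ∈ K := ⟨hz, le_of_lt h⟩
    have := hmax hzK
    have h2 : ‖z‖ ≤ ‖zs‖ := this
    linarith

private lemma blaschke_bound {r ρ0 : ℝ} {z₀ : ℂ} (hr : 0 < r) (hρ0 : 0 < ρ0) (hρ1 : ρ0 < 1)
    (hz₀ : ‖z₀‖ * (1 + ρ0) < 1 - ρ0) :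
    ∀ m : ℕ, ∀ f : ℂ → ℂ, DiffContOnCl ℂ f (ball 0 1) →
      (∀ z : ℂ, ‖z‖ = 1 → ‖f z‖ = r) →
      (∀ z ∈ closedBall (0:ℂ) 1, ρ0 ≤ ‖z‖ → r / 2 ≤ ‖f z‖) →
      r * ((ρ0 + ‖z₀‖) / (1 - ρ0 * ‖z₀‖)) ^ m < ‖f z₀‖ →
      ∃ C : ℝ, ∀ z ∈ ball (0:ℂ) 1, ‖deriv f z‖ ≤ C := by
  have hz₀1 : ‖z₀‖ < 1 := by nlinarith [norm_nonneg z₀]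
  have hden : 0 < 1 - ρ0 * ‖z₀‖ := by nlinarith [norm_nonneg z₀]
  set c := (ρ0 + ‖z₀‖) / (1 - ρ0 * ‖z₀‖) with hc
  have hcpos : 0 < c := div_pos (by positivity) hden
  have hz₀cb : z₀ ∈ closedBall (0:ℂ) 1 := mem_closedBall_zero_iff.2 hz₀1.le
  intro m
  induction m with
  | zero =>
      intro f hf hb hann hval
      exfalso
      rw [pow_zero, mul_one] at hval
      have := maxmod hf hb z₀ hz₀cb
      linarith
  | succ m ih =>
      intro f hf hb hann hval
      by_cases hzero : ∃ α ∈ ball (0:ℂ) 1, f α = 0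
      · obtain ⟨α, hαball, hα0⟩ := hzero
        have hαρ : ‖α‖ < ρ0 := by
          by_contra h
          push_neg at h
          have h2 := hann α (ball_subset_closedBall hαball) h
          rw [hα0] at h2
          simp only [norm_zero] at h2
          linarith
        have hα1 : ‖α‖ ≤ 1 := by linarith
        set g : ℂ → ℂ := fun z => (1 - (starRingEnd ℂ) α * z) * dslope f α z with hgdef
        have hfdiffα : DifferentiableAt ℂ f α :=
          hf.differentiableOn.differentiableAt (isOpen_ball.mem_nhds hαball)
        have hcontf : ContinuousOn f (closedBall (0:ℂ) 1) := by
          have := hf.continuousOn; rwa [closure_unit_ball] at this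
        have hds_diff : DifferentiableOn ℂ (dslope f α) (ball 0 1) :=
          (differentiableOn_dslope (isOpen_ball.mem_nhds hαball)).mpr hf.differentiableOn
        have hcb_nhds : closedBall (0:ℂ) 1 ∈ nhds α :=
          Filter.mem_of_superset (isOpen_ball.mem_nhds hαball) ball_subset_closedBall
        have hds_cont : ContinuousOn (dslope f α) (closedBall (0:ℂ) 1) :=
          (continuousOn_dslope hcb_nhds).mpr ⟨hcontf, hfdiffα⟩
        have hpoly_diff : Differentiable ℂ (fun z : ℂ => 1 - (starRingEnd ℂ) α * z) :=
          (differentiable_const _).sub (differentiable_id.const_mul _)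
        have hg : DiffContOnCl ℂ g (ball 0 1) := by
          refine ⟨hpoly_diff.differentiableOn.mul hds_diff, ?_⟩
          rw [closure_unit_ball]
          exact hpoly_diff.continuous.continuousOn.mul hds_cont
        have hkey : ∀ z : ℂ, (z - α) * g z = (1 - (starRingEnd ℂ) α * z) * f z := by
          intro z
          have h1 : (z - α) * dslope f α z = f z := by
            have h2 := sub_smul_dslope f α z
            rw [smul_eq_mul] at h2
            rw [h2, hα0, sub_zero]
          calc (z - α) * g z
              = (1 - (starRingEnd ℂ) α * z) * ((z - α) * dslope f α z) := by
                rw [hgdef]; ring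
            _ = (1 - (starRingEnd ℂ) α * z) * f z := by rw [h1]
        have hnormkey : ∀ z : ℂ,
            ‖z - α‖ * ‖g z‖ = ‖1 - (starRingEnd ℂ) α * z‖ * ‖f z‖ := by
          intro z
          rw [← norm_mul, ← norm_mul, hkey z]
        have hgb : ∀ z : ℂ, ‖z‖ = 1 → ‖g z‖ = r := by
          intro z hz
          have hne : ‖z - α‖ ≠ 0 := by
            intro h
            rw [norm_eq_zero, sub_eq_zero] at h
            rw [h] at hz
            linarith
          have h2 := hnormkey z
          rw [norm_one_sub_conj_mul_of_norm_one hz, hb z hz] at h2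
          exact mul_left_cancel₀ hne h2
        have hfg : ∀ z ∈ closedBall (0:ℂ) 1, ‖f z‖ ≤ ‖g z‖ := by
          intro z hz
          have hz1 : ‖z‖ ≤ 1 := mem_closedBall_zero_iff.1 hz
          rcases eq_or_ne z α with rfl | hne
          · rw [hα0]; simp only [norm_zero]; exact norm_nonneg _
          · have h1 : ‖z - α‖ * ‖f z‖ ≤ ‖1 - (starRingEnd ℂ) α * z‖ * ‖f z‖ :=
              mul_le_mul_of_nonneg_right (norm_sub_le_one_sub_conj_mul hα1 hz1) (norm_nonneg _)
            rw [← hnormkey z] at h1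
            have hpos : 0 < ‖z - α‖ := norm_pos_iff.2 (sub_ne_zero.2 hne)
            exact le_of_mul_le_mul_left h1 hpos
        have hgann : ∀ z ∈ closedBall (0:ℂ) 1, ρ0 ≤ ‖z‖ → r / 2 ≤ ‖g z‖ :=
          fun z hz hρ => (hann z hz hρ).trans (hfg z hz)
        have hgz₀ : r * c ^ m < ‖g z₀‖ := by
          have hfz₀pos : 0 < ‖f z₀‖ := lt_trans (by positivity) hval
          have h1 : ‖z₀ - α‖ ≤ ρ0 + ‖z₀‖ := by
            have := norm_sub_le z₀ α
            linarith
          have h2 : 1 - ρ0 * ‖z₀‖ ≤ ‖1 - (starRingEnd ℂ) α * z₀‖ := by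
            have h3 := norm_sub_norm_le (1:ℂ) ((starRingEnd ℂ) α * z₀)
            have hmul : ‖(starRingEnd ℂ) α * z₀‖ ≤ ρ0 * ‖z₀‖ := by
              rw [norm_mul, RCLike.norm_conj]
              exact mul_le_mul_of_nonneg_right hαρ.le (norm_nonneg _)
            rw [norm_one] at h3
            linarith
          have h3 : (1 - ρ0 * ‖z₀‖) * ‖f z₀‖ ≤ (ρ0 + ‖z₀‖) * ‖g z₀‖ := by
            calc (1 - ρ0 * ‖z₀‖) * ‖f z₀‖
                ≤ ‖1 - (starRingEnd ℂ) α * z₀‖ * ‖f z₀‖ :=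
                  mul_le_mul_of_nonneg_right h2 (norm_nonneg _)
              _ = ‖z₀ - α‖ * ‖g z₀‖ := (hnormkey z₀).symm
              _ ≤ (ρ0 + ‖z₀‖) * ‖g z₀‖ :=
                  mul_le_mul_of_nonneg_right h1 (norm_nonneg _)
          have h4 : r * c ^ (m + 1) * (1 - ρ0 * ‖z₀‖) < ‖f z₀‖ * (1 - ρ0 * ‖z₀‖) :=
            mul_lt_mul_of_pos_right hval hden
          have h5 : r * c ^ (m + 1) * (1 - ρ0 * ‖z₀‖) = r * c ^ m * (ρ0 + ‖z₀‖) := by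
            have hcc : c * (1 - ρ0 * ‖z₀‖) = ρ0 + ‖z₀‖ := div_mul_cancel₀ _ hden.ne'
            calc r * c ^ (m + 1) * (1 - ρ0 * ‖z₀‖)
                = r * c ^ m * (c * (1 - ρ0 * ‖z₀‖)) := by ring
              _ = r * c ^ m * (ρ0 + ‖z₀‖) := by rw [hcc]
          have hsum : 0 < ρ0 + ‖z₀‖ := by positivity
          nlinarith [h3, h4, h5]
        obtain ⟨C₁, hC₁⟩ := ih g hg hgb hgann hgz₀
        have hgmax : ∀ z ∈ closedBall (0:ℂ) 1, ‖g z‖ ≤ r := maxmod hg hgb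
        refine ⟨((1 - ρ0)⁻¹ + 2 * ((1 - ρ0) ^ 2)⁻¹) * r + C₁, ?_⟩
        intro z hz
        have hz1 : ‖z‖ < 1 := mem_ball_zero_iff.1 hz
        set d : ℂ := 1 - (starRingEnd ℂ) α * z with hd
        have hd_lb : 1 - ρ0 ≤ ‖d‖ := by
          have h3 := norm_sub_norm_le (1:ℂ) ((starRingEnd ℂ) α * z)
          have hmul : ‖(starRingEnd ℂ) α * z‖ ≤ ρ0 := by
            rw [norm_mul, RCLike.norm_conj]
            calc ‖α‖ * ‖z‖ ≤ ρ0 * 1 :=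
              mul_le_mul hαρ.le hz1.le (norm_nonneg _) hρ0.le
            _ = ρ0 := mul_one _
          rw [norm_one] at h3
          linarith
        have hd_pos : 0 < ‖d‖ := lt_of_lt_of_le (by linarith) hd_lb
        have hd_ne : d ≠ 0 := norm_pos_iff.1 hd_pos
        -- derivative computation
        have hΩopen : IsOpen {w : ℂ | (1:ℂ) - (starRingEnd ℂ) α * w ≠ 0} :=
          isOpen_ne_fun (continuous_const.sub (continuous_const.mul continuous_id)) continuous_const
        have hzΩ : z ∈ {w : ℂ | (1:ℂ) - (starRingEnd ℂ) α * w ≠ 0} := hd_ne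
        have hfeq : ∀ w ∈ {w : ℂ | (1:ℂ) - (starRingEnd ℂ) α * w ≠ 0},
            f w = (w - α) * ((1:ℂ) - (starRingEnd ℂ) α * w)⁻¹ * g w := by
          intro w hw
          have hw' : (1:ℂ) - (starRingEnd ℂ) α * w ≠ 0 := hw
          rw [eq_comm, mul_comm (w - α), mul_assoc, inv_mul_eq_iff_eq_mul₀ hw', hkey w]
        have hev : f =ᶠ[nhds z]
            fun w => (w - α) * ((1:ℂ) - (starRingEnd ℂ) α * w)⁻¹ * g w :=
          Filter.eventuallyEq_of_mem (hΩopen.mem_nhds hzΩ) hfeq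
        have hgz : HasDerivAt g (deriv g z) z :=
          ((hg.differentiableOn z hz).differentiableAt (isOpen_ball.mem_nhds hz)).hasDerivAt
        have hd1 : HasDerivAt (fun w : ℂ => (1:ℂ) - (starRingEnd ℂ) α * w)
            (-((starRingEnd ℂ) α * 1)) z :=
          ((hasDerivAt_id z).const_mul ((starRingEnd ℂ) α)).const_sub 1
        have hdinv : HasDerivAt (fun w : ℂ => ((1:ℂ) - (starRingEnd ℂ) α * w)⁻¹)
            (-(-((starRingEnd ℂ) α * 1)) / ((1 - (starRingEnd ℂ) α * z) ^ 2)) z :=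
          hd1.inv hd_ne
        have hb1 : HasDerivAt (fun w : ℂ => w - α) 1 z := (hasDerivAt_id z).sub_const α
        have hbmul := hb1.mul hdinv
        have hfd := hbmul.mul hgz
        have hder : deriv f z =
            (1 * ((1:ℂ) - (starRingEnd ℂ) α * z)⁻¹ +
              (z - α) * (-(-((starRingEnd ℂ) α * 1)) / ((1 - (starRingEnd ℂ) α * z) ^ 2))) * g z +
            ((z - α) * ((1:ℂ) - (starRingEnd ℂ) α * z)⁻¹) * deriv g z := by
          rw [hev.deriv_eq]
          exact hfd.deriv
        rw [hder]
        set A : ℂ := 1 * ((1:ℂ) - (starRingEnd ℂ) α * z)⁻¹ +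
            (z - α) * (-(-((starRingEnd ℂ) α * 1)) / ((1 - (starRingEnd ℂ) α * z) ^ 2)) with hAdef
        set B : ℂ := (z - α) * ((1:ℂ) - (starRingEnd ℂ) α * z)⁻¹ with hBdef
        have hgz_le : ‖g z‖ ≤ r := hgmax z (ball_subset_closedBall hz)
        have hdg_le : ‖deriv g z‖ ≤ C₁ := hC₁ z hz
        have hA : ‖A‖ ≤ (1 - ρ0)⁻¹ + 2 * ((1 - ρ0) ^ 2)⁻¹ := by
          rw [hAdef]
          refine (norm_add_le _ _).trans ?_
          have e1 : ‖1 * ((1:ℂ) - (starRingEnd ℂ) α * z)⁻¹‖ = ‖d‖⁻¹ := by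
            rw [one_mul, norm_inv]
          have e2 : ‖(z - α) * (-(-((starRingEnd ℂ) α * 1)) /
              ((1 - (starRingEnd ℂ) α * z) ^ 2))‖ = ‖z - α‖ * (‖α‖ / ‖d‖ ^ 2) := by
            rw [norm_mul, neg_neg, mul_one, norm_div, RCLike.norm_conj, norm_pow]
          rw [e1, e2]
          have hb1' : ‖d‖⁻¹ ≤ (1 - ρ0)⁻¹ := by
            apply inv_anti₀ (by linarith) hd_lb
          have hb2' : ‖z - α‖ * (‖α‖ / ‖d‖ ^ 2) ≤ 2 * ((1 - ρ0) ^ 2)⁻¹ := by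
            have hzα2 : ‖z - α‖ ≤ 2 := by
              have := norm_sub_le z α
              linarith
            have hρpos : (0:ℝ) < 1 - ρ0 := by linarith
            have hfrac : ‖α‖ / ‖d‖ ^ 2 ≤ ((1 - ρ0) ^ 2)⁻¹ := by
              rw [div_le_iff₀ (pow_pos hd_pos 2)]
              have h6 : (1 - ρ0) ^ 2 ≤ ‖d‖ ^ 2 := by
                apply pow_le_pow_left₀ hρpos.le hd_lb
              calc ‖α‖ ≤ 1 := hα1
                _ = ((1 - ρ0) ^ 2)⁻¹ * (1 - ρ0) ^ 2 := by
                    rw [inv_mul_cancel₀ (pow_pos hρpos 2).ne']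
                _ ≤ ((1 - ρ0) ^ 2)⁻¹ * ‖d‖ ^ 2 := by
                    apply mul_le_mul_of_nonneg_left h6
                    exact inv_nonneg.2 (pow_nonneg hρpos.le 2)
            exact mul_le_mul hzα2 hfrac
              (div_nonneg (norm_nonneg _) (pow_nonneg (norm_nonneg _) 2)) (by norm_num)
          linarith
        have hB : ‖B‖ ≤ 1 := by
          rw [hBdef, norm_mul, norm_inv]
          rw [mul_inv_le_iff₀ hd_pos, one_mul]
          exact norm_sub_le_one_sub_conj_mul hα1 hz1.le
        have hconst : 0 ≤ (1 - ρ0)⁻¹ + 2 * ((1 - ρ0) ^ 2)⁻¹ := by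
          have h7 : (0:ℝ) < 1 - ρ0 := by linarith
          have h8 := inv_nonneg.2 h7.le
          have h9 := inv_nonneg.2 (pow_nonneg h7.le 2)
          linarith
        have h11 : ‖A * g z + B * deriv g z‖ ≤ ‖A‖ * ‖g z‖ + ‖B‖ * ‖deriv g z‖ := by
          refine (norm_add_le _ _).trans ?_
          rw [norm_mul A (g z), norm_mul B (deriv g z)]
        refine h11.trans ?_
        have h10 := add_le_add
          (mul_le_mul hA hgz_le (norm_nonneg _) hconst)
          (mul_le_mul hB hdg_le (norm_nonneg _) zero_le_one)
        linarith
      · push_neg at hzero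
        have hnz : ∀ z ∈ closedBall (0:ℂ) 1, f z ≠ 0 := by
          intro z hz
          rcases lt_or_ge ‖z‖ ρ0 with h | h
          · exact hzero z (mem_ball_zero_iff.2 (h.trans hρ1))
          · intro h0
            have h2 := hann z hz h
            rw [h0] at h2
            simp only [norm_zero] at h2
            linarith
        refine ⟨0, fun z hz => ?_⟩
        rw [deriv_eq_zero_of_nonvanishing hr hf hb hnz z hz]
        simp

private lemma exists_deriv_bound {f : ℂ → ℂ} {r : ℝ} (hr : 0 < r)
    (hf : DiffContOnCl ℂ f (ball 0 1)) (hb : ∀ z : ℂ, ‖z‖ = 1 → ‖f z‖ = r) :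
    ∃ C : ℝ, ∀ z ∈ ball (0:ℂ) 1, ‖deriv f z‖ ≤ C := by
  have hcontf : ContinuousOn f (closedBall (0:ℂ) 1) := by
    have := hf.continuousOn; rwa [closure_unit_ball] at this
  obtain ⟨ρ0, hρ0, hρ1, hann⟩ := exists_annulus hr hcontf hb
  by_cases hnz : ∀ z ∈ closedBall (0:ℂ) 1, f z ≠ 0
  · exact ⟨0, fun z hz => by
      rw [deriv_eq_zero_of_nonvanishing hr hf hb hnz z hz]; simp⟩
  · set δ := (1 - ρ0) / (1 + ρ0) with hδ
    have hδpos : 0 < δ := div_pos (by linarith) (by linarith)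
    have hρnorm : ‖((ρ0:ℝ):ℂ)‖ = ρ0 := by
      rw [Complex.norm_real, Real.norm_eq_abs, abs_of_pos hρ0]
    have hρball : ((ρ0:ℝ):ℂ) ∈ closedBall (0:ℂ) 1 := by
      rw [mem_closedBall_zero_iff, hρnorm]; linarith
    have hfρ : r / 2 ≤ ‖f ((ρ0:ℝ):ℂ)‖ := hann _ hρball (le_of_eq hρnorm.symm)
    have hz₀ex : ∃ z₀ ∈ ball (0:ℂ) δ, f z₀ ≠ 0 := by
      by_contra h
      push_neg at h
      have hzero : Set.EqOn f 0 (ball (0:ℂ) 1) := by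
        apply AnalyticOnNhd.eqOn_zero_of_preconnected_of_eventuallyEq_zero
          (hf.differentiableOn.analyticOnNhd isOpen_ball)
          (convex_ball (0:ℂ) 1).isPreconnected (mem_ball_self one_pos)
        exact Filter.eventuallyEq_of_mem (ball_mem_nhds (0:ℂ) hδpos)
          (fun z hz => h z hz)
      have h2 : f ((ρ0:ℝ):ℂ) = 0 := hzero (by rw [mem_ball_zero_iff, hρnorm]; exact hρ1)
      rw [h2] at hfρ
      simp only [norm_zero] at hfρ
      linarith
    obtain ⟨z₀, hz₀ball, hz₀ne⟩ := hz₀ex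
    have hz₀norm : ‖z₀‖ < δ := mem_ball_zero_iff.1 hz₀ball
    have hz₀cond : ‖z₀‖ * (1 + ρ0) < 1 - ρ0 := by
      rw [hδ, lt_div_iff₀ (by linarith : (0:ℝ) < 1 + ρ0)] at hz₀norm
      exact hz₀norm
    have hz₀1 : ‖z₀‖ < 1 := by nlinarith [norm_nonneg z₀]
    have hden : 0 < 1 - ρ0 * ‖z₀‖ := by nlinarith [norm_nonneg z₀]
    set c := (ρ0 + ‖z₀‖) / (1 - ρ0 * ‖z₀‖) with hc
    have hclt : c < 1 := by
      rw [hc, div_lt_one hden]; nlinarith [norm_nonneg z₀]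
    have hfz₀pos : 0 < ‖f z₀‖ := norm_pos_iff.2 hz₀ne
    obtain ⟨m, hm⟩ := exists_pow_lt_of_lt_one (div_pos hfz₀pos hr) hclt
    have hval : r * c ^ m < ‖f z₀‖ := by
      rw [lt_div_iff₀ hr] at hm
      linarith
    exact blaschke_bound hr hρ0 hρ1 hz₀cond m f hf hb hann hval

private lemma det_of_complex_mul (c : ℂ) :
    (((1 : ℂ →L[ℂ] ℂ).smulRight c).restrictScalars ℝ).det = Complex.normSq c := by
  have h : ((((1 : ℂ →L[ℂ] ℂ).smulRight c).restrictScalars ℝ : ℂ →L[ℝ] ℂ) : ℂ →ₗ[ℝ] ℂ)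
      = Algebra.lmul ℝ ℂ c := by
    apply LinearMap.ext
    intro z
    simp [mul_comm]
  show LinearMap.det _ = _
  rw [h, ← Algebra.norm_apply, Algebra.norm_complex_apply]


/-- **Holomorphic discs on a product torus have area at least `min aⱼ`.** Let
`u : (D,∂D) → (ℂⁿ, T(a₁,…,aₙ))` be a non-constant holomorphic map of the closed unit
disc with boundary on the product torus `T(a₁,…,aₙ)` (where `T(a) = {π|z|² = a}`).
Its symplectic area `∫_D u*ωₙ = ∫_D Σⱼ |uⱼ'|²` is at least `min(a₁,…,aₙ)`. -/
theorem holomorphic_disc_area_ge_min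
    (n : ℕ) (a : Fin (n + 1) → ℝ) (ha : ∀ j, 0 < a j)
    (u : ℂ → Fin (n + 1) → ℂ)
    (hu_cont : ContinuousOn u (closedBall 0 1))
    (hu_holo : DifferentiableOn ℂ u (ball 0 1))
    (hu_bdry : ∀ z : ℂ, ‖z‖ = 1 → ∀ j, Real.pi * ‖u z j‖ ^ 2 = a j)
    (hu_nonconst : ∃ z ∈ closedBall (0:ℂ) 1, ∃ w ∈ closedBall (0:ℂ) 1, u z ≠ u w) :
    Finset.univ.inf' Finset.univ_nonempty a
      ≤ ∫ z in ball (0:ℂ) 1, ∑ j, ‖deriv (fun w => u w j) z‖ ^ 2 := by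
  classical
  have hπ : 0 < Real.pi := Real.pi_pos
  set R : Fin (n+1) → ℝ := fun j => Real.sqrt (a j / Real.pi) with hR
  have hRpos : ∀ j, 0 < R j := fun j => Real.sqrt_pos.2 (div_pos (ha j) hπ)
  have hcomp_cont : ∀ j, ContinuousOn (fun w => u w j) (closedBall (0:ℂ) 1) :=
    fun j => (continuousOn_pi.1 hu_cont) j
  have hcomp_diff : ∀ j, DifferentiableOn ℂ (fun w => u w j) (ball 0 1) :=
    fun j => (differentiableOn_pi.1 hu_holo) j
  have hdc : ∀ j, DiffContOnCl ℂ (fun w => u w j) (ball 0 1) := by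
    intro j
    refine ⟨hcomp_diff j, ?_⟩
    rw [closure_unit_ball]
    exact hcomp_cont j
  have hbnorm : ∀ (j) (z : ℂ), ‖z‖ = 1 → ‖u z j‖ = R j := by
    intro j z hz
    have h1 := hu_bdry z hz j
    have h2 : ‖u z j‖^2 = a j / Real.pi := by
      rw [eq_div_iff hπ.ne']
      linear_combination h1
    show ‖u z j‖ = Real.sqrt (a j / Real.pi)
    rw [← h2, Real.sqrt_sq (norm_nonneg _)]
  have hCex : ∀ j, ∃ C : ℝ, ∀ z ∈ ball (0:ℂ) 1, ‖deriv (fun w => u w j) z‖ ≤ C :=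
    fun j => exists_deriv_bound (hRpos j) (hdc j) (hbnorm j)
  choose C hC using hCex
  set F : ℂ → ℝ := fun z => ∑ j, ‖deriv (fun w => u w j) z‖ ^ 2 with hF
  have hFnonneg : ∀ z, 0 ≤ F z := fun z => Finset.sum_nonneg (fun j _ => sq_nonneg _)
  have hderiv_cont : ∀ j, ContinuousOn (deriv (fun w => u w j)) (ball (0:ℂ) 1) := by
    intro j
    exact ((hcomp_diff j).analyticOnNhd isOpen_ball).deriv.continuousOn
  have hFcont : ContinuousOn F (ball (0:ℂ) 1) := by
    apply continuousOn_finset_sum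
    intro j _
    exact (continuous_norm.comp_continuousOn (hderiv_cont j)).pow 2
  have hFbound : ∀ z ∈ ball (0:ℂ) 1, ‖F z‖ ≤ ∑ j, (C j)^2 := by
    intro z hz
    rw [Real.norm_of_nonneg (hFnonneg z)]
    apply Finset.sum_le_sum
    intro j _
    have h1 := hC j z hz
    have h2 : (0:ℝ) ≤ ‖deriv (fun w => u w j) z‖ := norm_nonneg _
    nlinarith
  have hInt : IntegrableOn F (ball (0:ℂ) 1) := by
    constructor
    · exact hFcont.aestronglyMeasurable measurableSet_ball
    · apply MeasureTheory.HasFiniteIntegral.restrict_of_bounded (C := ∑ j, (C j)^2)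
        measure_ball_lt_top
      exact (ae_restrict_iff' measurableSet_ball).2 (Filter.Eventually.of_forall hFbound)
  obtain ⟨z1, hz1, w1, hw1, hne⟩ := hu_nonconst
  obtain ⟨j₀, hj₀⟩ := Function.ne_iff.1 hne
  set f : ℂ → ℂ := fun w => u w j₀ with hfdef
  have hnotconst : ¬ ∃ v : ℂ, Set.EqOn f (Function.const ℂ v) (ball (0:ℂ) 1) := by
    rintro ⟨v, hv⟩
    have hcl : Set.EqOn f (Function.const ℂ v) (closedBall (0:ℂ) 1) :=
      hv.of_subset_closure (hcomp_cont j₀) continuousOn_const ball_subset_closedBall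
        (by rw [closure_unit_ball])
    exact hj₀ ((hcl hz1).trans (hcl hw1).symm)
  have hmax := maxmod (hdc j₀) (hbnorm j₀)
  have hlt : ∀ z ∈ ball (0:ℂ) 1, ‖f z‖ < R j₀ := by
    intro z hz
    rcases lt_or_eq_of_le (hmax z (ball_subset_closedBall hz)) with h | h
    · exact h
    · exfalso
      have hmaxon : IsMaxOn (norm ∘ f) (ball (0:ℂ) 1) z := by
        intro y hy
        exact (hmax y (ball_subset_closedBall hy)).trans h.symm.le
      have heq := Complex.eqOn_of_isPreconnected_of_isMaxOn_norm
        (convex_ball (0:ℂ) 1).isPreconnected isOpen_ball (hdc j₀).differentiableOn hz hmaxon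
      exact hnotconst ⟨f z, heq⟩
  have hAn : AnalyticOnNhd ℂ f (ball (0:ℂ) 1) := (hcomp_diff j₀).analyticOnNhd isOpen_ball
  have hopen : IsOpen (f '' ball (0:ℂ) 1) := by
    rcases hAn.is_constant_or_isOpen (convex_ball (0:ℂ) 1).isPreconnected with h | h
    · exfalso
      obtain ⟨v, hv⟩ := h
      exact hnotconst ⟨v, fun z hz => hv z hz⟩
    · exact h _ subset_rfl isOpen_ball
  have himgsub : ball (0:ℂ) (R j₀) ⊆ f '' ball (0:ℂ) 1 := by
    intro w₀ hw₀
    by_contra hw₀S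
    set K := f '' closedBall (0:ℂ) 1 with hKdef
    have hKcomp : IsCompact K :=
      (isCompact_closedBall (0:ℂ) 1).image_of_continuousOn (hcomp_cont j₀)
    have himgK : ∀ w ∈ ball (0:ℂ) (R j₀), w ∈ K → w ∈ f '' ball (0:ℂ) 1 := by
      intro w hw hwK
      obtain ⟨z, hzcb, rfl⟩ := hwK
      rcases lt_or_eq_of_le (mem_closedBall_zero_iff.1 hzcb) with h | h
      · exact ⟨z, mem_ball_zero_iff.2 h, rfl⟩
      · exfalso
        have h3 : ‖f z‖ = R j₀ := hbnorm j₀ z h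
        rw [mem_ball_zero_iff] at hw
        linarith
    have hcover : ball (0:ℂ) (R j₀) ⊆ (f '' ball (0:ℂ) 1) ∪ Kᶜ := by
      intro w hw
      by_cases hK : w ∈ K
      · exact Or.inl (himgK w hw hK)
      · exact Or.inr hK
    have hS1 : (ball (0:ℂ) (R j₀) ∩ (f '' ball (0:ℂ) 1)).Nonempty := by
      refine ⟨f 0, ?_, ⟨0, mem_ball_self one_pos, rfl⟩⟩
      rw [mem_ball_zero_iff]
      exact hlt 0 (mem_ball_self one_pos)
    have hS2 : (ball (0:ℂ) (R j₀) ∩ Kᶜ).Nonempty := by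
      refine ⟨w₀, hw₀, fun hK => hw₀S (himgK w₀ hw₀ hK)⟩
    obtain ⟨y, -, hyU, hyV⟩ := (convex_ball (0:ℂ) (R j₀)).isPreconnected
      _ _ hopen hKcomp.isClosed.isOpen_compl hcover hS1 hS2
    obtain ⟨z, hzball, rfl⟩ := hyU
    exact hyV ⟨z, ball_subset_closedBall hzball, rfl⟩
  have hmeas1 : ENNReal.ofReal (a j₀) ≤ volume (f '' ball (0:ℂ) 1) := by
    have h1 : volume (ball (0:ℂ) (R j₀)) = ENNReal.ofReal (a j₀) := by
      have hsq : (R j₀)^2 = a j₀ / Real.pi := Real.sq_sqrt (div_nonneg (ha j₀).le hπ.le)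
      rw [Complex.volume_ball, ← ENNReal.ofReal_pow (hRpos j₀).le, hsq,
        ← ENNReal.ofReal_coe_nnreal, NNReal.coe_real_pi,
        ← ENNReal.ofReal_mul (div_nonneg (ha j₀).le hπ.le),
        div_mul_cancel₀ _ hπ.ne']
    rw [← h1]
    exact measure_mono himgsub
  set F' : ℂ → (ℂ →L[ℝ] ℂ) :=
    fun z => ((1 : ℂ →L[ℂ] ℂ).smulRight (deriv f z)).restrictScalars ℝ with hF'
  have hF'deriv : ∀ z ∈ ball (0:ℂ) 1, HasFDerivWithinAt f (F' z) (ball (0:ℂ) 1) z := by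
    intro z hz
    have h1 : DifferentiableAt ℂ f z :=
      ((hcomp_diff j₀) z hz).differentiableAt (isOpen_ball.mem_nhds hz)
    exact ((h1.hasDerivAt.hasFDerivAt).restrictScalars ℝ).hasFDerivWithinAt
  have hmeas2 : volume (f '' ball (0:ℂ) 1)
      ≤ ∫⁻ z in ball (0:ℂ) 1, ENNReal.ofReal (‖deriv f z‖^2) := by
    have h1 := MeasureTheory.addHaar_image_le_lintegral_abs_det_fderiv
      volume measurableSet_ball hF'deriv
    refine h1.trans (le_of_eq ?_)
    apply lintegral_congr
    intro z
    congr 1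
    simp only [hF']
    rw [det_of_complex_mul, _root_.abs_of_nonneg (Complex.normSq_nonneg _), ← Complex.sq_norm]
  have hmeas3 : (∫⁻ z in ball (0:ℂ) 1, ENNReal.ofReal (‖deriv f z‖^2))
      ≤ ∫⁻ z in ball (0:ℂ) 1, ENNReal.ofReal (F z) := by
    apply lintegral_mono
    intro z
    apply ENNReal.ofReal_le_ofReal
    exact Finset.single_le_sum (f := fun j => ‖deriv (fun w => u w j) z‖^2)
      (fun j _ => sq_nonneg _) (Finset.mem_univ j₀)
  have hmeas4 : (∫⁻ z in ball (0:ℂ) 1, ENNReal.ofReal (F z))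
      = ENNReal.ofReal (∫ z in ball (0:ℂ) 1, F z) :=
    (MeasureTheory.ofReal_integral_eq_lintegral_ofReal hInt
      (Filter.Eventually.of_forall hFnonneg)).symm
  have hfinal : ENNReal.ofReal (a j₀) ≤ ENNReal.ofReal (∫ z in ball (0:ℂ) 1, F z) :=
    le_trans hmeas1 (le_trans hmeas2 (le_trans hmeas3 (le_of_eq hmeas4)))
  have hle : a j₀ ≤ ∫ z in ball (0:ℂ) 1, F z := by
    have hnn : 0 ≤ ∫ z in ball (0:ℂ) 1, F z := integral_nonneg hFnonneg
    exact (ENNReal.ofReal_le_ofReal_iff hnn).1 hfinal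
  exact le_trans (Finset.inf'_le a (Finset.mem_univ j₀)) hle
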